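/- For every natural number n ≥ 1 and real a ≥ 0, the sequence x_k = ⌊a · 10^{nk}⌋^{1/n} / 10^k (using integer n-th root of the floor) converges to a^{1/n} as k → ∞, with |x_k − a^{1/n}| ≤ 10^{−k}. -/

import Mathlib

/-- Integer `n`-th root: the greatest `r` with `r ^ n ≤ m`. -/
def intNthRoot (n m : ℕ) : ℕ := Nat.findGreatest (fun r => r ^ n ≤ m) m

lemma intNthRoot_pow_le (n m : ℕ) (hn : 1 ≤ n) : (intNthRoot n m) ^ n ≤ m := by
  have h0 : (0 : ℕ) ^ n ≤ m := by
    rw [zero_pow (by omega)]; exact Nat.zero_le m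
  exact Nat.findGreatest_spec (P := fun r => r ^ n ≤ m) (m := 0) (Nat.zero_le m) h0

lemma lt_intNthRoot_succ_pow (n m : ℕ) (hn : 1 ≤ n) : m < (intNthRoot n m + 1) ^ n := by
  by_contra h
  push_neg at h
  have hle : intNthRoot n m + 1 ≤ m :=
    le_trans (Nat.le_self_pow (by omega) _) h
  exact Nat.findGreatest_is_greatest (Nat.lt_succ_self _) hle h

theorem rod_calculus_root_extraction (n : ℕ) (hn : 1 ≤ n) (a : ℝ) (ha : 0 ≤ a) :
    (∀ k : ℕ, |(intNthRoot n ⌊a * 10 ^ (n * k)⌋₊ : ℝ) / 10 ^ k - a ^ ((n : ℝ)⁻¹)|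
        ≤ (10 ^ k)⁻¹) ∧
    Filter.Tendsto (fun k : ℕ => (intNthRoot n ⌊a * 10 ^ (n * k)⌋₊ : ℝ) / 10 ^ k)
      Filter.atTop (nhds (a ^ ((n : ℝ)⁻¹))) := by
  have key : ∀ k : ℕ, |(intNthRoot n ⌊a * 10 ^ (n * k)⌋₊ : ℝ) / 10 ^ k - a ^ ((n : ℝ)⁻¹)|
      ≤ (10 ^ k)⁻¹ := by
    intro k
    set m : ℕ := ⌊a * 10 ^ (n * k)⌋₊ with hm
    set r : ℕ := intNthRoot n m with hr
    set b : ℝ := a ^ ((n : ℝ)⁻¹) * 10 ^ k with hb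
    have hten : (0:ℝ) < 10 ^ k := by positivity
    have hb0 : 0 ≤ b := by positivity
    have hbn : b ^ n = a * 10 ^ (n * k) := by
      rw [hb, mul_pow, Real.rpow_inv_natCast_pow ha (by omega), ← pow_mul, mul_comm k n]
    have hma : (m : ℝ) ≤ a * 10 ^ (n * k) := Nat.floor_le (by positivity)
    have ham : a * 10 ^ (n * k) < m + 1 := Nat.lt_floor_add_one _
    have h1 : (r : ℝ) ^ n ≤ b ^ n := by
      rw [hbn]
      calc ((r : ℝ) ^ n) = ((r ^ n : ℕ) : ℝ) := by push_cast; ring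
        _ ≤ (m : ℝ) := by exact_mod_cast intNthRoot_pow_le n m hn
        _ ≤ _ := hma
    have hrb : (r : ℝ) ≤ b :=
      le_of_pow_le_pow_left₀ (by omega) hb0 h1
    have h2 : b ^ n < ((r : ℝ) + 1) ^ n := by
      rw [hbn]
      calc a * 10 ^ (n * k) < (m : ℝ) + 1 := ham
        _ ≤ (((r + 1) ^ n : ℕ) : ℝ) := by
            exact_mod_cast Nat.succ_le_of_lt (lt_intNthRoot_succ_pow n m hn)
        _ = ((r : ℝ) + 1) ^ n := by push_cast; ring
    have hbr : b < (r : ℝ) + 1 := by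
      by_contra h
      push_neg at h
      exact absurd (pow_le_pow_left₀ (by positivity) h n) (not_le.mpr h2)
    have hroot : a ^ ((n : ℝ)⁻¹) = b / 10 ^ k := by
      field_simp [hb]
      rw [hb, one_div]
    rw [hroot, abs_sub_le_iff]
    constructor
    · rw [div_sub_div_same, div_le_iff₀ hten]
      rw [inv_mul_cancel₀ (ne_of_gt hten)]
      linarith
    · rw [div_sub_div_same, div_le_iff₀ hten]
      rw [inv_mul_cancel₀ (ne_of_gt hten)]
      linarith
  refine ⟨key, ?_⟩
  have h0 : Filter.Tendsto (fun k : ℕ => ((10:ℝ) ^ k)⁻¹) Filter.atTop (nhds 0) := by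
    simpa [Function.comp_def] using tendsto_inv_atTop_zero.comp
      (tendsto_pow_atTop_atTop_of_one_lt (by norm_num : (1:ℝ) < 10))
  have hsq := squeeze_zero (fun k => abs_nonneg _) key h0
  rw [tendsto_iff_dist_tendsto_zero]
  simpa [Real.dist_eq] using hsq
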